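/- Kraft's inequality: a sequence (ℓ_i) of natural numbers is the sequence of lengths of the members of some prefix-free set of binary strings if and only if Σ_i 2^{-ℓ_i} ≤ 1. -/

import Mathlib

open MeasureTheory
open scoped ENNReal

/-- The length-`n` initial segment of an infinite binary sequence. -/
def pref (x : ℕ → Bool) (n : ℕ) : List Bool := List.ofFn (fun i : Fin n => x i)

/-- A set of binary strings is prefix-free if no member is a proper prefix of another. -/
def PFree (S : Set (List Bool)) : Prop := ∀ a ∈ S, ∀ b ∈ S, a <+: b → a = b

/-- Kolmogorov complexity of `b` relative to machine `M`: the least length of an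
input mapped by `M` to `b`, `∞` if there is none. -/
noncomputable def Cpx (M : List Bool →. List Bool) (b : List Bool) : ℕ∞ :=
  sInf {n : ℕ∞ | ∃ p : List Bool, b ∈ M p ∧ (p.length : ℕ∞) = n}

/-- A universal machine for plain complexity. -/
def Universal (U : List Bool →. List Bool) : Prop :=
  Partrec U ∧ ∀ L : List Bool →. List Bool, Partrec L →
    ∃ k : ℕ, ∀ b : List Bool, Cpx U b ≤ Cpx L b + (k : ℕ∞)

/-- A prefix-free universal machine: prefix-free domain, universal among machines
with prefix-free domain. -/
def PFUniversal (V : List Bool →. List Bool) : Prop :=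
  Partrec V ∧ PFree {p | (V p).Dom} ∧
    ∀ L : List Bool →. List Bool, Partrec L → PFree {p | (L p).Dom} →
      ∃ k : ℕ, ∀ b : List Bool, Cpx V b ≤ Cpx L b + (k : ℕ∞)

/-- `cyl S` is the set of infinite binary sequences extending some member of `S`. -/
def cyl (S : Set (List Bool)) : Set (ℕ → Bool) := {x | ∃ b ∈ S, pref x b.length = b}

/-- The `e`-th computably enumerable set of binary strings. -/
def W (e : ℕ) : Set (List Bool) :=
  {b | ((Denumerable.ofNat Nat.Partrec.Code e).eval (Encodable.encode b)).Dom}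

/-- The binary-digit expansion of a real number. -/
noncomputable def binSeq (r : ℝ) : ℕ → Bool := fun n => decide (⌊r * 2 ^ (n + 1)⌋ % 2 = 1)

/-- The fair-coin (uniform product) measure on Cantor space, as the pushforward of
Lebesgue measure on `(0,1]` under binary expansion. -/
noncomputable def coin : Measure (ℕ → Bool) :=
  Measure.map binSeq (volume.restrict (Set.Ioc (0 : ℝ) 1))

/-- Martin-Löf test in sense 2. -/
def MLTest (f : ℕ → ℕ) : Prop :=
  Computable f ∧ ∀ n : ℕ, coin (cyl (W (f n))) ≤ (2 : ℝ≥0∞)⁻¹ ^ n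

/-- `x` fails the sense-2 test `f`. -/
def Fails (x : ℕ → Bool) (f : ℕ → ℕ) : Prop := ∀ n : ℕ, x ∈ cyl (W (f n))

/-- Martin-Löf randomness (sense 2). -/
def MLRandom (x : ℕ → Bool) : Prop := ∀ f : ℕ → ℕ, MLTest f → ¬ Fails x f

/-- The dyadic rational value of a finite binary string. -/
noncomputable def sval (b : List Bool) : ℝ :=
  ∑ i : Fin b.length, if b.get i then ((2 : ℝ))⁻¹ ^ (i.val + 1) else 0

/-- Chaitin's halting probability of machine `V`. -/
noncomputable def Omega (V : List Bool →. List Bool) : ℝ :=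
  ∑' p : {p : List Bool // (V p).Dom}, ((2 : ℝ))⁻¹ ^ (p.val.length)

/-- Martin-Löf test in sense 1. -/
def MLTest1 (t : List Bool →. ℕ) : Prop :=
  Partrec t ∧ ∀ m : ℕ, coin (cyl {b | ∃ v ∈ t b, m ≤ v}) ≤ (2 : ℝ≥0∞)⁻¹ ^ m

/-- `x` passes the sense-1 test `t`: the values of `t` on `x`'s prefixes are bounded. -/
def Passes1 (x : ℕ → Bool) (t : List Bool →. ℕ) : Prop :=
  ∃ B : ℕ, ∀ (n : ℕ) (v : ℕ), v ∈ t (pref x n) → v ≤ B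

/-- A set of binary strings is computably enumerable. -/
def CE (S : Set (List Bool)) : Prop :=
  ∃ f : List Bool →. ℕ, Partrec f ∧ S = {b | (f b).Dom}


/-! ### Auxiliary lemmas for Kraft's inequality -/

/-- The length-`n` binary representation (MSB first) of a natural number. -/
def kbits : ℕ → ℕ → List Bool
  | 0, _ => []
  | n + 1, m => kbits n (m / 2) ++ [decide (m % 2 = 1)]

lemma kbits_length : ∀ n m, (kbits n m).length = n
  | 0, _ => rfl
  | n + 1, m => by simp [kbits, kbits_length n]

lemma kbits_append : ∀ (d j m : ℕ), kbits (j + d) m = kbits j (m / 2 ^ d) ++ kbits d m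
  | 0, j, m => by simp [kbits]
  | d + 1, j, m => by
    show kbits (j + d + 1) m = _
    rw [kbits, kbits_append d j (m / 2), kbits, Nat.div_div_eq_div_mul, List.append_assoc]
    have h : 2 * 2 ^ d = 2 ^ (d + 1) := by rw [pow_succ]; ring
    rw [h]

lemma kbits_inj : ∀ (n m m' : ℕ), m < 2 ^ n → m' < 2 ^ n → kbits n m = kbits n m' → m = m'
  | 0, m, m', hm, hm', _ => by simp [pow_zero] at hm hm'; omega
  | n + 1, m, m', hm, hm', h => by
    rw [kbits, kbits] at h
    have hl : (kbits n (m / 2)).length = (kbits n (m' / 2)).length := by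
      rw [kbits_length, kbits_length]
    obtain ⟨h1, h2⟩ := List.append_inj h hl
    have hmod : m % 2 = m' % 2 := by
      simp only [List.cons.injEq] at h2
      rcases Nat.mod_two_eq_zero_or_one m with e | e <;>
        rcases Nat.mod_two_eq_zero_or_one m' with e' | e' <;>
          simp [e, e'] at h2 ⊢ <;> omega
    have hdiv : m / 2 = m' / 2 := by
      refine kbits_inj n _ _ ?_ ?_ h1 <;>
      · rw [Nat.div_lt_iff_lt_mul (by norm_num)]
        calc _ < 2 ^ (n + 1) := by assumption
        _ = 2 ^ n * 2 := by ring
    omega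

lemma exists_ofFn {w : List Bool} {N : ℕ} (h : w.length = N) :
    ∃ v : Fin N → Bool, List.ofFn v = w := by
  subst h; exact ⟨w.get, List.ofFn_get w⟩

lemma kraft_finset_sum {ι : Type} (ℓ : ι → ℕ) (c : ι → List Bool)
    (hinj : Function.Injective c) (hpf : PFree (Set.range c))
    (hlen : ∀ i, (c i).length = ℓ i) (s : Finset ι) :
    ∑ i ∈ s, ((2 : ℝ≥0∞))⁻¹ ^ (ℓ i) ≤ 1 := by
  classical
  set N := s.sup ℓ with hN
  have hle : ∀ i ∈ s, ℓ i ≤ N := fun i hi => Finset.le_sup hi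
  -- the finset of length-N extensions of c i
  set F : ι → Finset (List Bool) := fun i =>
    Finset.image (fun t : Fin (N - ℓ i) → Bool => c i ++ List.ofFn t) Finset.univ with hF
  have hcard : ∀ i ∈ s, (F i).card = 2 ^ (N - ℓ i) := by
    intro i _
    rw [hF]
    rw [Finset.card_image_of_injective _ (fun t t' ht => by
      simpa using List.append_cancel_left ht)]
    simp
  have hmemlen : ∀ i ∈ s, ∀ w ∈ F i, w.length = N := by
    intro i hi w hw
    simp only [hF, Finset.mem_image] at hw
    obtain ⟨t, _, rfl⟩ := hw
    have := hle i hi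
    simp [hlen i]
    omega
  have hmempre : ∀ i, ∀ w ∈ F i, c i <+: w := by
    intro i w hw
    simp only [hF, Finset.mem_image] at hw
    obtain ⟨t, _, rfl⟩ := hw
    exact List.prefix_append _ _
  -- pairwise disjoint
  have hdisj : (s : Set ι).PairwiseDisjoint F := by
    intro i hi j hj hij
    simp only [Function.onFun, Finset.disjoint_left]
    intro w hwi hwj
    apply hij
    apply hinj
    have h1 := hmempre i w hwi
    have h2 := hmempre j w hwj
    rcases List.prefix_or_prefix_of_prefix h1 h2 with h | h
    · exact hpf _ ⟨i, rfl⟩ _ ⟨j, rfl⟩ h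
    · exact (hpf _ ⟨j, rfl⟩ _ ⟨i, rfl⟩ h).symm
  -- all extensions live in the set of length-N strings
  have hsub : s.biUnion F ⊆ Finset.image (fun v : Fin N → Bool => List.ofFn v) Finset.univ := by
    intro w hw
    rw [Finset.mem_biUnion] at hw
    obtain ⟨i, hi, hwi⟩ := hw
    have hwl := hmemlen i hi w hwi
    rw [Finset.mem_image]
    obtain ⟨v, hv⟩ := exists_ofFn hwl
    exact ⟨v, Finset.mem_univ _, hv⟩
  have hnat : ∑ i ∈ s, 2 ^ (N - ℓ i) ≤ 2 ^ N := by
    calc ∑ i ∈ s, 2 ^ (N - ℓ i) = ∑ i ∈ s, (F i).card := by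
          exact Finset.sum_congr rfl fun i hi => (hcard i hi).symm
      _ = (s.biUnion F).card := (Finset.card_biUnion hdisj).symm
      _ ≤ (Finset.image (fun v : Fin N → Bool => List.ofFn v) Finset.univ).card :=
          Finset.card_le_card hsub
      _ ≤ 2 ^ N := by
          calc _ ≤ (Finset.univ : Finset (Fin N → Bool)).card := Finset.card_image_le
          _ = 2 ^ N := by simp
  -- now transfer to ℝ≥0∞
  have hterm : ∀ i ∈ s, ((2 : ℝ≥0∞))⁻¹ ^ (ℓ i) = (2 : ℝ≥0∞) ^ (N - ℓ i) * (2 : ℝ≥0∞)⁻¹ ^ N := by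
    intro i hi
    have h2 : (2 : ℝ≥0∞) * 2⁻¹ = 1 := ENNReal.mul_inv_cancel (by norm_num) (by norm_num)
    have : ((2 : ℝ≥0∞))⁻¹ ^ N = 2⁻¹ ^ (N - ℓ i) * 2⁻¹ ^ (ℓ i) := by
      rw [← pow_add]
      have := hle i hi
      congr 1
      omega
    rw [this, ← mul_assoc, ← mul_pow, h2, one_pow, one_mul]
  calc ∑ i ∈ s, ((2 : ℝ≥0∞))⁻¹ ^ (ℓ i)
      = (∑ i ∈ s, (2 : ℝ≥0∞) ^ (N - ℓ i)) * (2 : ℝ≥0∞)⁻¹ ^ N := by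
        rw [Finset.sum_mul]
        exact Finset.sum_congr rfl hterm
    _ ≤ (2 : ℝ≥0∞) ^ N * (2 : ℝ≥0∞)⁻¹ ^ N := by
        gcongr
        calc (∑ i ∈ s, (2 : ℝ≥0∞) ^ (N - ℓ i)) = ((∑ i ∈ s, 2 ^ (N - ℓ i) : ℕ) : ℝ≥0∞) := by
              push_cast; rfl
          _ ≤ ((2 ^ N : ℕ) : ℝ≥0∞) := by exact_mod_cast hnat
          _ = (2 : ℝ≥0∞) ^ N := by push_cast; rfl
    _ = 1 := by
        rw [← mul_pow, ENNReal.mul_inv_cancel (by norm_num) (by norm_num), one_pow]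


lemma kraft_converse {ι : Type} (ℓ : ι → ℕ)
    (h : ∑' i : ι, ((2 : ℝ≥0∞))⁻¹ ^ (ℓ i) ≤ 1) :
    ∃ c : ι → List Bool, Function.Injective c ∧ PFree (Set.range c) ∧
      ∀ i : ι, (c i).length = ℓ i := by
  classical
  have h2 : (2 : ℝ≥0∞) * 2⁻¹ = 1 := ENNReal.mul_inv_cancel (by norm_num) (by norm_num)
  have hpowinv : ∀ n : ℕ, (2 : ℝ≥0∞) ^ n * (2 : ℝ≥0∞)⁻¹ ^ n = 1 := by
    intro n; rw [← mul_pow, h2, one_pow]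
  -- each level set is finite
  have hfin : ∀ n : ℕ, {j : ι | ℓ j ≤ n}.Finite := by
    intro n
    by_contra hinf
    obtain ⟨t, hts, htc⟩ := Set.Infinite.exists_subset_card_eq hinf (2 ^ n + 1)
    have hsum1 : ∑ j ∈ t, ((2 : ℝ≥0∞))⁻¹ ^ (ℓ j) ≤ 1 := le_trans (ENNReal.sum_le_tsum t) h
    have hlb : ((2 ^ n + 1 : ℕ) : ℝ≥0∞) * (2 : ℝ≥0∞)⁻¹ ^ n ≤ ∑ j ∈ t, ((2 : ℝ≥0∞))⁻¹ ^ (ℓ j) := by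
      rw [← htc, ← nsmul_eq_mul]
      refine Finset.card_nsmul_le_sum t _ _ ?_
      intro j hj
      refine pow_le_pow_of_le_one zero_le ?_ (hts hj)
      rw [ENNReal.inv_le_one]
      exact one_le_two
    have hgt : (1 : ℝ≥0∞) < ((2 ^ n + 1 : ℕ) : ℝ≥0∞) * (2 : ℝ≥0∞)⁻¹ ^ n := by
      have hne0 : ((2 : ℝ≥0∞))⁻¹ ^ n ≠ 0 := by
        apply pow_ne_zero; exact ENNReal.inv_ne_zero.mpr (by norm_num)
      have hnetop : ((2 : ℝ≥0∞))⁻¹ ^ n ≠ ∞ := by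
        apply ENNReal.pow_ne_top; exact ENNReal.inv_ne_top.mpr (by norm_num)
      calc (1 : ℝ≥0∞) = (2 : ℝ≥0∞) ^ n * (2 : ℝ≥0∞)⁻¹ ^ n := (hpowinv n).symm
        _ < ((2 ^ n + 1 : ℕ) : ℝ≥0∞) * (2 : ℝ≥0∞)⁻¹ ^ n := by
            rw [(ENNReal.mul_left_strictMono hne0 hnetop).lt_iff_lt]
            push_cast
            exact ENNReal.lt_add_right (ENNReal.pow_ne_top (by norm_num)) one_ne_zero
    exact absurd (le_trans hlb hsum1) (not_le.mpr hgt)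
  haveI hcount : Countable ι := by
    rw [← Set.countable_univ_iff]
    refine Set.Countable.mono ?_ (Set.countable_iUnion (fun n : ℕ => (hfin n).countable))
    intro i _
    simp only [Set.mem_iUnion, Set.mem_setOf_eq]
    exact ⟨ℓ i, le_rfl⟩
  obtain ⟨e, he⟩ := Countable.exists_injective_nat ι
  -- the order
  set r : ι → ι → Prop := fun a b => ℓ a < ℓ b ∨ (ℓ a = ℓ b ∧ e a < e b) with hr
  have hirr : ∀ i, ¬ r i i := by intro i hi; rcases hi with h' | ⟨_, h'⟩ <;> omega
  have htrans : ∀ a b c, r a b → r b c → r a c := by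
    intro a b c hab hbc
    rcases hab with h1 | ⟨h1, h1'⟩ <;> rcases hbc with h2 | ⟨h2, h2'⟩ <;> simp only [hr] <;> omega
  have htri : ∀ i j, i ≠ j → r i j ∨ r j i := by
    intro i j hij
    rcases lt_trichotomy (ℓ i) (ℓ j) with h' | h' | h'
    · exact Or.inl (Or.inl h')
    · rcases lt_trichotomy (e i) (e j) with h'' | h'' | h''
      · exact Or.inl (Or.inr ⟨h', h''⟩)
      · exact absurd (he h'') hij
      · exact Or.inr (Or.inr ⟨h'.symm, h''⟩)
    · exact Or.inr (Or.inl h')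
  have hlej : ∀ {j i}, r j i → ℓ j ≤ ℓ i := by
    intro j i hji; rcases hji with h' | ⟨h', _⟩ <;> omega
  have hP : ∀ i, {j : ι | r j i}.Finite := fun i => (hfin (ℓ i)).subset (fun j hj => hlej hj)
  set m : ι → ℕ := fun i => ∑ j ∈ (hP i).toFinset, 2 ^ (ℓ i - ℓ j) with hm
  -- upper bound on m i
  have hA : ∀ i, m i < 2 ^ (ℓ i) := by
    intro i
    have hnotmem : i ∉ (hP i).toFinset := by
      rw [Set.Finite.mem_toFinset]; exact hirr i
    have hsum1 : ((2 : ℝ≥0∞))⁻¹ ^ (ℓ i) + ∑ j ∈ (hP i).toFinset, ((2 : ℝ≥0∞))⁻¹ ^ (ℓ j) ≤ 1 := by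
      have h3 : ∑ j ∈ insert i (hP i).toFinset, ((2 : ℝ≥0∞))⁻¹ ^ (ℓ j) ≤ 1 :=
        le_trans (ENNReal.sum_le_tsum _) h
      rwa [Finset.sum_insert hnotmem] at h3
    have hterm : ∀ j ∈ (hP i).toFinset, ((2 : ℝ≥0∞))⁻¹ ^ (ℓ j)
        = ((2 ^ (ℓ i - ℓ j) : ℕ) : ℝ≥0∞) * (2 : ℝ≥0∞)⁻¹ ^ (ℓ i) := by
      intro j hj
      have hji : ℓ j ≤ ℓ i := hlej ((hP i).mem_toFinset.mp hj)
      have hp : ((2 : ℝ≥0∞))⁻¹ ^ (ℓ i) = 2⁻¹ ^ (ℓ i - ℓ j) * 2⁻¹ ^ (ℓ j) := by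
        rw [← pow_add]; congr 1; omega
      rw [hp]
      push_cast
      rw [← mul_assoc, ← mul_pow, h2, one_pow, one_mul]
    have hsum2 : ((m i : ℝ≥0∞) + 1) * (2 : ℝ≥0∞)⁻¹ ^ (ℓ i) ≤ 1 := by
      have : ∑ j ∈ (hP i).toFinset, ((2 : ℝ≥0∞))⁻¹ ^ (ℓ j)
          = (m i : ℝ≥0∞) * (2 : ℝ≥0∞)⁻¹ ^ (ℓ i) := by
        rw [Finset.sum_congr rfl hterm, ← Finset.sum_mul, hm]
        push_cast
        rfl
      calc ((m i : ℝ≥0∞) + 1) * (2 : ℝ≥0∞)⁻¹ ^ (ℓ i)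
          = (2 : ℝ≥0∞)⁻¹ ^ (ℓ i) + (m i : ℝ≥0∞) * (2 : ℝ≥0∞)⁻¹ ^ (ℓ i) := by ring
        _ ≤ 1 := by rw [← this]; exact hsum1
    have hfinal : ((m i : ℝ≥0∞) + 1) ≤ (2 : ℝ≥0∞) ^ (ℓ i) := by
      calc ((m i : ℝ≥0∞) + 1) = ((m i : ℝ≥0∞) + 1) * ((2 : ℝ≥0∞)⁻¹ ^ (ℓ i) * 2 ^ (ℓ i)) := by
            rw [mul_comm ((2 : ℝ≥0∞)⁻¹ ^ (ℓ i)), hpowinv, mul_one]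
        _ = (((m i : ℝ≥0∞) + 1) * (2 : ℝ≥0∞)⁻¹ ^ (ℓ i)) * 2 ^ (ℓ i) := by ring
        _ ≤ 1 * 2 ^ (ℓ i) := by gcongr
        _ = 2 ^ (ℓ i) := one_mul _
    have : ((m i + 1 : ℕ) : ℝ≥0∞) ≤ ((2 ^ (ℓ i) : ℕ) : ℝ≥0∞) := by push_cast; exact hfinal
    have h4 : m i + 1 ≤ 2 ^ ℓ i := by exact_mod_cast this
    omega
  -- lower bound on m i from predecessors
  have hB : ∀ i j, r j i → (m j + 1) * 2 ^ (ℓ i - ℓ j) ≤ m i := by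
    intro i j hji
    have hji' : ℓ j ≤ ℓ i := hlej hji
    have hjmem : j ∉ (hP j).toFinset := by rw [Set.Finite.mem_toFinset]; exact hirr j
    have hsubset : insert j (hP j).toFinset ⊆ (hP i).toFinset := by
      intro k hk
      rw [Finset.mem_insert] at hk
      rw [Set.Finite.mem_toFinset]
      rcases hk with rfl | hk
      · exact hji
      · exact htrans _ _ _ ((hP j).mem_toFinset.mp hk) hji
    have hstep : ∑ k ∈ insert j (hP j).toFinset, 2 ^ (ℓ i - ℓ k) ≤ m i :=
      Finset.sum_le_sum_of_subset hsubset
    rw [Finset.sum_insert hjmem] at hstep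
    have hrw : ∑ k ∈ (hP j).toFinset, 2 ^ (ℓ i - ℓ k)
        = 2 ^ (ℓ i - ℓ j) * m j := by
      rw [hm, Finset.mul_sum]
      refine Finset.sum_congr rfl ?_
      intro k hk
      have hkj : ℓ k ≤ ℓ j := hlej ((hP j).mem_toFinset.mp hk)
      rw [← pow_add]
      congr 1
      omega
    rw [hrw] at hstep
    calc (m j + 1) * 2 ^ (ℓ i - ℓ j) = 2 ^ (ℓ i - ℓ j) + 2 ^ (ℓ i - ℓ j) * m j := by ring
      _ ≤ m i := hstep
  -- the code
  have hnopre : ∀ i j : ι, kbits (ℓ i) (m i) <+: kbits (ℓ j) (m j) → i = j := by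
    intro i j hpre
    by_contra hij
    have hle : ℓ i ≤ ℓ j := by
      have := hpre.length_le
      rwa [kbits_length, kbits_length] at this
    set d := ℓ j - ℓ i with hd
    have hsplit : kbits (ℓ j) (m j) = kbits (ℓ i) (m j / 2 ^ d) ++ kbits d (m j) := by
      have hh : ℓ i + d = ℓ j := by omega
      rw [← hh, kbits_append]
    obtain ⟨t, ht⟩ := hpre
    rw [hsplit] at ht
    have heq : kbits (ℓ i) (m i) = kbits (ℓ i) (m j / 2 ^ d) :=
      List.append_inj_left ht (by rw [kbits_length, kbits_length])
    have hdpos : 0 < 2 ^ d := Nat.pow_pos (n := d) (by norm_num)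
    have hdivlt : m j / 2 ^ d < 2 ^ (ℓ i) := by
      rw [Nat.div_lt_iff_lt_mul hdpos]
      calc m j < 2 ^ (ℓ j) := hA j
        _ = 2 ^ (ℓ i) * 2 ^ d := by rw [← pow_add]; congr 1; omega
    have hmval : m i = m j / 2 ^ d := kbits_inj _ _ _ (hA i) hdivlt heq
    have h1 : m i * 2 ^ d ≤ m j := by
      rw [hmval]; exact Nat.div_mul_le_self _ _
    have hlt2 : m j < (m i + 1) * 2 ^ d := by
      rw [← Nat.div_lt_iff_lt_mul hdpos, ← hmval]
      omega
    rcases htri i j hij with hrr | hrr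
    · have hbb := hB j i hrr
      rw [← hd] at hbb
      exact lt_irrefl _ (lt_of_lt_of_le hlt2 hbb)
    · have hji : ℓ j = ℓ i := le_antisymm (hlej hrr) hle
      have hbb := hB i j hrr
      rw [show ℓ i - ℓ j = 0 by omega, pow_zero, mul_one] at hbb
      rw [show d = 0 by omega, pow_zero, mul_one] at h1
      omega
  refine ⟨fun i => kbits (ℓ i) (m i), ?_, ?_, fun i => kbits_length _ _⟩
  · intro i j hij
    have hij' : kbits (ℓ i) (m i) = kbits (ℓ j) (m j) := hij
    exact hnopre i j (by rw [hij'])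

  · rintro a ⟨i, rfl⟩ b ⟨j, rfl⟩ hab
    rw [hnopre i j hab]

/-- Kraft's inequality: `(ℓ_i)` is the length sequence of (the members of) a
prefix-free set iff `Σ 2^{-ℓ_i} ≤ 1`. -/
theorem stmt9 (ι : Type) (ℓ : ι → ℕ) :
    (∃ c : ι → List Bool, Function.Injective c ∧ PFree (Set.range c) ∧
        ∀ i : ι, (c i).length = ℓ i) ↔
      ∑' i : ι, ((2 : ℝ≥0∞))⁻¹ ^ (ℓ i) ≤ 1 := by
  constructor
  · rintro ⟨c, hinj, hpf, hlen⟩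
    rw [ENNReal.tsum_eq_iSup_sum]
    exact iSup_le fun s => kraft_finset_sum ℓ c hinj hpf hlen s
  · exact kraft_converse ℓ
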